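/- arXiv:1302.3041 — 3 statements merged into one kernel-verified Lean document; each statement's English description precedes it below -/
import Mathlib

section
/- The Markov kernels K_a(x,dy) = e^{-(1-a)/(ax)} δ_{ax}(dy) + (1-a) y^{-2} e^{-(1-a)/y} 1_{{y > ax}} dy and Ǩ_a(y,dx) = a δ_{y/a}(dx) + (1-a) x^{-2} e^{-1/x + a/y} 1_{{x < y/a}} dx satisfy the equilibrium (detailed balance up to time reversal) relation π(dx) K_a(x,dy) = π(dy) Ǩ_a(y,dx), where π(dx) = x^{-2} e^{-1/x} 1_{{x > 0}} dx is the standard 1-Fréchet law. -/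
open MeasureTheory Real

/-- The standard 1-Fréchet law `π(dx) = x⁻² e^{-1/x} 1_{x>0} dx`. -/
noncomputable def frechetLaw : Measure ℝ :=
  volume.withDensity fun x => ENNReal.ofReal (if 0 < x then exp (-(1 / x)) / x ^ 2 else 0)

/-- The forward max-AR(1) kernel
`K_a(x,dy) = e^{-(1-a)/(ax)} δ_{ax}(dy) + (1-a) y⁻² e^{-(1-a)/y} 1_{y>ax} dy`. -/
noncomputable def forwardKernel (a : ℝ) (x : ℝ) : Measure ℝ :=
  ENNReal.ofReal (exp (-((1 - a) / (a * x)))) • Measure.dirac (a * x) +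
    volume.withDensity fun y =>
      ENNReal.ofReal (if a * x < y then (1 - a) / y ^ 2 * exp (-((1 - a) / y)) else 0)

/-- The backward (time-reversed) kernel
`Ǩ_a(y,dx) = a δ_{y/a}(dx) + (1-a) x⁻² e^{-1/x + a/y} 1_{0<x<y/a} dx`. -/
noncomputable def backwardKernel (a : ℝ) (y : ℝ) : Measure ℝ :=
  ENNReal.ofReal a • Measure.dirac (y / a) +
    volume.withDensity fun x =>
      ENNReal.ofReal (if 0 < x ∧ x < y / a then (1 - a) / x ^ 2 * exp (-(1 / x) + a / y) else 0)

namespace Stmt6Aux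

/-- The Fréchet density. -/
noncomputable def D : ℝ → ENNReal := fun x =>
  ENNReal.ofReal (if 0 < x then exp (-(1 / x)) / x ^ 2 else 0)

/-- Density of the absolutely continuous part of the forward kernel. -/
noncomputable def kf (a x y : ℝ) : ENNReal :=
  ENNReal.ofReal (if a * x < y then (1 - a) / y ^ 2 * exp (-((1 - a) / y)) else 0)

/-- Density of the absolutely continuous part of the backward kernel. -/
noncomputable def kb (a y x : ℝ) : ENNReal :=
  ENNReal.ofReal (if 0 < x ∧ x < y / a then (1 - a) / x ^ 2 * exp (-(1 / x) + a / y) else 0)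

lemma measurable_D : Measurable D := by
  apply ENNReal.measurable_ofReal.comp
  apply Measurable.ite measurableSet_Ioi
  · exact ((Real.continuous_exp.measurable).comp
      ((measurable_const.div measurable_id).neg)).div (measurable_id.pow_const 2)
  · exact measurable_const

lemma measurable_kf (a : ℝ) : Measurable fun p : ℝ × ℝ => kf a p.1 p.2 := by
  apply ENNReal.measurable_ofReal.comp
  apply Measurable.ite
  · exact measurableSet_lt (measurable_fst.const_mul a) measurable_snd
  · exact (measurable_const.div (measurable_snd.pow_const 2)).mul
      ((Real.continuous_exp.measurable).comp ((measurable_const.div measurable_snd).neg))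
  · exact measurable_const

lemma measurable_kb (a : ℝ) : Measurable fun p : ℝ × ℝ => kb a p.1 p.2 := by
  apply ENNReal.measurable_ofReal.comp
  apply Measurable.ite
  · exact (measurableSet_lt measurable_const measurable_snd).inter
      (measurableSet_lt measurable_snd (measurable_fst.div_const a))
  · exact (measurable_const.div (measurable_snd.pow_const 2)).mul
      ((Real.continuous_exp.measurable).comp
        (((measurable_const.div measurable_snd).neg).add (measurable_const.div measurable_fst)))
  · exact measurable_const

lemma forward_apply (a x : ℝ) {B : Set ℝ} (hB : MeasurableSet B) :
    forwardKernel a x B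
      = ENNReal.ofReal (exp (-((1 - a) / (a * x)))) * B.indicator 1 (a * x)
        + ∫⁻ y in B, kf a x y := by
  rw [forwardKernel, Measure.add_apply, Measure.smul_apply, smul_eq_mul,
    Measure.dirac_apply' _ hB, withDensity_apply _ hB]
  rfl

lemma backward_apply (a y : ℝ) {A : Set ℝ} (hA : MeasurableSet A) :
    backwardKernel a y A
      = ENNReal.ofReal a * A.indicator 1 (y / a) + ∫⁻ x in A, kb a y x := by
  rw [backwardKernel, Measure.add_apply, Measure.smul_apply, smul_eq_mul,
    Measure.dirac_apply' _ hA, withDensity_apply _ hA]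
  rfl

lemma dirac_part (a : ℝ) (ha : 0 < a) {A B : Set ℝ}
    (hA : MeasurableSet A) (hB : MeasurableSet B)
    (hApos : A ⊆ Set.Ioi 0) :
    ∫⁻ x in A, D x * (ENNReal.ofReal (exp (-((1 - a) / (a * x)))) * B.indicator 1 (a * x))
      = ∫⁻ y in B, D y * (ENNReal.ofReal a * A.indicator 1 (y / a)) := by
  have ha0 : a ≠ 0 := ne_of_gt ha
  set G : ℝ → ENNReal := fun y =>
    A.indicator 1 (y / a) * B.indicator 1 y
      * ENNReal.ofReal (exp (-(1 / y)) * (a ^ 2 / y ^ 2)) with hGdef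
  have hG : Measurable G := by
    apply Measurable.mul
    apply Measurable.mul
    · exact (measurable_one.indicator hA).comp (measurable_id.div_const a)
    · exact measurable_one.indicator hB
    · exact ENNReal.measurable_ofReal.comp
        (((Real.continuous_exp.measurable).comp
          ((measurable_const.div measurable_id).neg)).mul
          (measurable_const.div (measurable_id.pow_const 2)))
  have key : ∀ x : ℝ,
      A.indicator (fun x => D x *
        (ENNReal.ofReal (exp (-((1 - a) / (a * x)))) * B.indicator 1 (a * x))) x
        = G (a * x) := by
    intro x
    have hax : a * x / a = x := by field_simp
    by_cases hx : x ∈ A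
    · have hx0 : 0 < x := hApos hx
      have haxne : a * x ≠ 0 := by positivity
      have hDc : D x * ENNReal.ofReal (exp (-((1 - a) / (a * x))))
          = ENNReal.ofReal (exp (-(1 / (a * x))) * (a ^ 2 / (a * x) ^ 2)) := by
        unfold D
        rw [if_pos hx0, ← ENNReal.ofReal_mul (by positivity)]
        congr 1
        have hexp : (-(1 / x)) + (-((1 - a) / (a * x))) = -(1 / (a * x)) := by
          field_simp
          ring
        rw [div_mul_eq_mul_div, ← Real.exp_add, hexp, mul_pow]
        rw [div_eq_iff (by positivity)]
        field_simp
      rw [Set.indicator_of_mem hx, hGdef]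
      simp only [hax, Set.indicator_of_mem hx, Pi.one_apply, one_mul]
      rw [← mul_assoc, hDc, mul_comm]
    · rw [Set.indicator_of_notMem hx, hGdef]
      simp only [hax, Set.indicator_of_notMem hx, zero_mul]
  have key2 : ∀ y : ℝ,
      ENNReal.ofReal |a⁻¹| * G y
        = B.indicator (fun y => D y * (ENNReal.ofReal a * A.indicator 1 (y / a))) y := by
    intro y
    by_cases hy : y ∈ B
    · rw [Set.indicator_of_mem hy, hGdef]
      simp only [Set.indicator_of_mem hy, Pi.one_apply, mul_one]
      by_cases hya : y / a ∈ A
      · have hya0 : 0 < y / a := hApos hya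
        have hy0 : 0 < y := by
          have := mul_pos hya0 ha
          rwa [div_mul_cancel₀ y ha0] at this
        rw [Set.indicator_of_mem hya]
        simp only [Pi.one_apply, mul_one, one_mul]
        unfold D
        rw [if_pos hy0, ← ENNReal.ofReal_mul (abs_nonneg _),
          ← ENNReal.ofReal_mul (le_of_lt (by positivity))]
        congr 1
        rw [abs_of_pos (inv_pos.mpr ha)]
        field_simp
      · rw [Set.indicator_of_notMem hya]
        simp
    · rw [Set.indicator_of_notMem hy, hGdef]
      simp only [Set.indicator_of_notMem hy, mul_zero, zero_mul]
  calc ∫⁻ x in A, D x * (ENNReal.ofReal (exp (-((1 - a) / (a * x)))) * B.indicator 1 (a * x))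
      = ∫⁻ x, A.indicator (fun x => D x *
          (ENNReal.ofReal (exp (-((1 - a) / (a * x)))) * B.indicator 1 (a * x))) x :=
        (lintegral_indicator hA _).symm
    _ = ∫⁻ x, G (a * x) := by simp_rw [key]
    _ = ∫⁻ y, G y ∂(Measure.map (a * ·) volume) :=
        (lintegral_map hG (measurable_const_mul a)).symm
    _ = ENNReal.ofReal |a⁻¹| * ∫⁻ y, G y := by
        rw [Real.map_volume_mul_left ha0, lintegral_smul_measure, smul_eq_mul]
    _ = ∫⁻ y, ENNReal.ofReal |a⁻¹| * G y := (lintegral_const_mul _ hG).symm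
    _ = ∫⁻ y, B.indicator (fun y => D y * (ENNReal.ofReal a * A.indicator 1 (y / a))) y := by
        simp_rw [key2]
    _ = ∫⁻ y in B, D y * (ENNReal.ofReal a * A.indicator 1 (y / a)) :=
        lintegral_indicator hB _

lemma cont_part (a : ℝ) (ha : 0 < a) {A B : Set ℝ}
    (hA : MeasurableSet A) (hB : MeasurableSet B)
    (hApos : A ⊆ Set.Ioi 0) (hBpos : B ⊆ Set.Ioi 0) :
    ∫⁻ x in A, D x * ∫⁻ y in B, kf a x y = ∫⁻ y in B, D y * ∫⁻ x in A, kb a y x := by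
  have hkfx : ∀ x : ℝ, Measurable fun y => kf a x y := fun x =>
    (measurable_kf a).comp (measurable_const.prodMk measurable_id)
  have hkby : ∀ y : ℝ, Measurable fun x => kb a y x := fun y =>
    (measurable_kb a).comp (measurable_const.prodMk measurable_id)
  have h1 : ∀ x : ℝ, D x * ∫⁻ y in B, kf a x y = ∫⁻ y in B, D x * kf a x y := fun x =>
    (lintegral_const_mul (D x) (hkfx x)).symm
  simp_rw [h1]
  rw [lintegral_lintegral_swap
    (((measurable_D.comp measurable_fst).mul (measurable_kf a)).aemeasurable)]
  refine setLIntegral_congr_fun hB (fun y hy => ?_)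
  have hy0 : 0 < y := hBpos hy
  rw [show D y * ∫⁻ x in A, kb a y x = ∫⁻ x in A, D y * kb a y x from
    (lintegral_const_mul (D y) (hkby y)).symm]
  refine setLIntegral_congr_fun hA (fun x hx => ?_)
  have hx0 : 0 < x := hApos hx
  unfold D kf kb
  rw [if_pos hx0, if_pos hy0]
  by_cases hxy : a * x < y
  · rw [if_pos hxy, if_pos ⟨hx0, (lt_div_iff₀ ha).mpr (by linarith [mul_comm x a])⟩]
    rw [← ENNReal.ofReal_mul (by positivity), ← ENNReal.ofReal_mul (by positivity)]
    congr 1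
    have he : exp (-(1 / x)) * exp (-((1 - a) / y)) = exp (-(1 / y)) * exp (-(1 / x) + a / y) := by
      rw [← Real.exp_add, ← Real.exp_add]
      congr 1
      ring
    linear_combination ((1 - a) / (x ^ 2 * y ^ 2)) * he
  · rw [if_neg hxy, if_neg (fun h => hxy (by
      have := (lt_div_iff₀ ha).mp h.2
      linarith [mul_comm x a]))]
    simp

end Stmt6Aux

open Stmt6Aux in
/-- Equilibrium (detailed balance up to time reversal) relation
`π(dx) K_a(x,dy) = π(dy) Ǩ_a(y,dx)` as measures on `(0,∞)²`: for all measurable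
rectangles `A × B` in `(0,∞)²`, `∫_A K_a(x,B) π(dx) = ∫_B Ǩ_a(y,A) π(dy)`. -/
theorem stmt6 (a : ℝ) (ha : 0 < a) (ha1 : a < 1) :
    ∀ A B : Set ℝ, MeasurableSet A → MeasurableSet B →
      A ⊆ Set.Ioi 0 → B ⊆ Set.Ioi 0 →
      ∫⁻ x in A, forwardKernel a x B ∂frechetLaw
        = ∫⁻ y in B, backwardKernel a y A ∂frechetLaw := by
  intro A B hA hB hApos hBpos
  have hfrechet : frechetLaw = volume.withDensity D := rfl
  have hgF : Measurable fun x => forwardKernel a x B := by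
    have : (fun x => forwardKernel a x B) = fun x =>
        ENNReal.ofReal (exp (-((1 - a) / (a * x)))) * B.indicator 1 (a * x)
          + ∫⁻ y in B, kf a x y := funext fun x => forward_apply a x hB
    rw [this]
    apply Measurable.add
    · exact (ENNReal.measurable_ofReal.comp ((Real.continuous_exp.measurable).comp
        ((measurable_const.div (measurable_id.const_mul a)).neg))).mul
        ((measurable_one.indicator hB).comp (measurable_id.const_mul a))
    · exact Measurable.lintegral_prod_right (measurable_kf a)
  have hgB : Measurable fun y => backwardKernel a y A := by
    have : (fun y => backwardKernel a y A) = fun y =>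
        ENNReal.ofReal a * A.indicator 1 (y / a) + ∫⁻ x in A, kb a y x :=
      funext fun y => backward_apply a y hA
    rw [this]
    apply Measurable.add
    · exact measurable_const.mul ((measurable_one.indicator hA).comp (measurable_id.div_const a))
    · exact Measurable.lintegral_prod_right (measurable_kb a)
  rw [hfrechet, setLIntegral_withDensity_eq_setLIntegral_mul volume measurable_D hgF hA,
    setLIntegral_withDensity_eq_setLIntegral_mul volume measurable_D hgB hB]
  simp only [Pi.mul_apply]
  have hm1 : Measurable fun x =>
      D x * (ENNReal.ofReal (exp (-((1 - a) / (a * x)))) * B.indicator 1 (a * x)) :=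
    measurable_D.mul ((ENNReal.measurable_ofReal.comp ((Real.continuous_exp.measurable).comp
      ((measurable_const.div (measurable_id.const_mul a)).neg))).mul
      ((measurable_one.indicator hB).comp (measurable_id.const_mul a)))
  have hm2 : Measurable fun y =>
      D y * (ENNReal.ofReal a * A.indicator 1 (y / a)) :=
    measurable_D.mul (measurable_const.mul
      ((measurable_one.indicator hA).comp (measurable_id.div_const a)))
  calc ∫⁻ x in A, D x * forwardKernel a x B
      = ∫⁻ x in A,
          (D x * (ENNReal.ofReal (exp (-((1 - a) / (a * x)))) * B.indicator 1 (a * x))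
            + D x * ∫⁻ y in B, kf a x y) :=
        setLIntegral_congr_fun hA (fun x _ => by
          rw [forward_apply a x hB, mul_add])
    _ = (∫⁻ x in A, D x * (ENNReal.ofReal (exp (-((1 - a) / (a * x)))) * B.indicator 1 (a * x)))
          + ∫⁻ x in A, D x * ∫⁻ y in B, kf a x y :=
        lintegral_add_left hm1 _
    _ = (∫⁻ y in B, D y * (ENNReal.ofReal a * A.indicator 1 (y / a)))
          + ∫⁻ y in B, D y * ∫⁻ x in A, kb a y x := by
        rw [dirac_part a ha hA hB hApos, cont_part a ha hA hB hApos hBpos]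
    _ = ∫⁻ y in B,
          (D y * (ENNReal.ofReal a * A.indicator 1 (y / a)) + D y * ∫⁻ x in A, kb a y x) :=
        (lintegral_add_left hm2 _).symm
    _ = ∫⁻ y in B, D y * backwardKernel a y A :=
        setLIntegral_congr_fun hB (fun y _ => by
          rw [backward_apply a y hA, mul_add])
end

section
/- For a ∈ (0,1), the max-AR(1) process is not reversible: the law of the pair (X_a(0), X_a(1)) differs from the law of (X_a(1), X_a(0)). Concretely, P[X_a(1) = a X_a(0)] = E[e^{-(1-a)/(aX)}] > 0 while P[X_a(0) = a X_a(1)] = 0, where X is standard 1-Fréchet. -/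
open MeasureTheory Real ProbabilityTheory

lemma frechet_atomless {Ω : Type*} [MeasurableSpace Ω] (μ : Measure Ω) [IsProbabilityMeasure μ]
    (Z : Ω → ℝ) (hmZ : Measurable Z)
    (hZ : ∀ y : ℝ, 0 < y → μ {ω | Z ω ≤ y} = ENNReal.ofReal (exp (-(1 / y))))
    (hZ0 : ∀ y : ℝ, y ≤ 0 → μ {ω | Z ω ≤ y} = 0) (t : ℝ) :
    μ {ω | Z ω = t} = 0 := by
  rcases le_or_gt t 0 with ht | ht
  · refine le_antisymm (le_trans (measure_mono ?_) (hZ0 t ht).le) zero_le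
    intro ω (h : Z ω = t); exact h.le
  · have key : ∀ᶠ s in nhdsWithin t (Set.Iio t),
        μ {ω | Z ω = t} ≤ ENNReal.ofReal (exp (-(1/t)) - exp (-(1/s))) := by
      filter_upwards [Ioo_mem_nhdsLT_of_mem (a := t/2) (c := t) (Set.mem_Ioc.mpr ⟨by linarith, le_rfl⟩)] with s hs
      have hs0 : (0:ℝ) < s := by have := hs.1; linarith
      have hsub : {ω | Z ω = t} ⊆ {ω | Z ω ≤ t} \ {ω | Z ω ≤ s} := by
        intro ω h
        simp only [Set.mem_setOf_eq] at h
        refine ⟨h.le, ?_⟩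
        simp only [Set.mem_setOf_eq, not_le]
        have := hs.2; linarith
      calc μ {ω | Z ω = t} ≤ μ ({ω | Z ω ≤ t} \ {ω | Z ω ≤ s}) := measure_mono hsub
        _ = μ {ω | Z ω ≤ t} - μ {ω | Z ω ≤ s} := by
            refine measure_diff (fun ω (h : Z ω ≤ s) => le_trans h hs.2.le)
              ((hmZ measurableSet_Iic).nullMeasurableSet) (measure_ne_top μ _)
        _ = ENNReal.ofReal (exp (-(1/t))) - ENNReal.ofReal (exp (-(1/s))) := by
            rw [hZ t ht, hZ s hs0]
        _ = ENNReal.ofReal (exp (-(1/t)) - exp (-(1/s))) :=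
            (ENNReal.ofReal_sub _ (exp_pos _).le).symm
    have hlim : Filter.Tendsto (fun s => ENNReal.ofReal (exp (-(1/t)) - exp (-(1/s))))
        (nhdsWithin t (Set.Iio t)) (nhds 0) := by
      have hc : ContinuousAt (fun s : ℝ => ENNReal.ofReal (exp (-(1/t)) - exp (-(1/s)))) t := by
        apply ENNReal.continuous_ofReal.continuousAt.comp
        exact (continuousAt_const.sub
          (Real.continuous_exp.continuousAt.comp
            ((continuousAt_const.div continuousAt_id ht.ne').neg)))
      have := hc.tendsto.mono_left (nhdsWithin_le_nhds (s := Set.Iio t))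
      simpa using this
    simpa using ge_of_tendsto hlim key

/-- Non-reversibility of the max-AR(1) process for `a ∈ (0,1)`: with `X = X_a(0)` standard
1-Fréchet, `F` standard 1-Fréchet independent of `X`, and `Y = X_a(1) = max(aX, (1-a)F)`,
one has `P[Y = aX] = E[e^{-(1-a)/(aX)}] > 0` while `P[X = aY] = 0`, and the law of
`(X, Y)` differs from the law of `(Y, X)`. -/
theorem stmt10 {Ω : Type*} [MeasurableSpace Ω] (μ : Measure Ω) [IsProbabilityMeasure μ]
    (a : ℝ) (ha : 0 < a) (ha1 : a < 1)
    (X F : Ω → ℝ) (hmX : Measurable X) (hmF : Measurable F)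
    (hindep : IndepFun X F μ)
    (hX : ∀ y : ℝ, 0 < y → μ {ω | X ω ≤ y} = ENNReal.ofReal (exp (-(1 / y))))
    (hX0 : ∀ y : ℝ, y ≤ 0 → μ {ω | X ω ≤ y} = 0)
    (hF : ∀ y : ℝ, 0 < y → μ {ω | F ω ≤ y} = ENNReal.ofReal (exp (-(1 / y))))
    (hF0 : ∀ y : ℝ, y ≤ 0 → μ {ω | F ω ≤ y} = 0)
    (Y : Ω → ℝ) (hY : ∀ ω, Y ω = max (a * X ω) ((1 - a) * F ω)) :
    μ {ω | Y ω = a * X ω}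
        = ∫⁻ ω, ENNReal.ofReal (exp (-((1 - a) / (a * X ω)))) ∂μ ∧
    0 < μ {ω | Y ω = a * X ω} ∧
    μ {ω | X ω = a * Y ω} = 0 ∧
    Measure.map (fun ω => (X ω, Y ω)) μ ≠ Measure.map (fun ω => (Y ω, X ω)) μ := by
  have h1a : (0:ℝ) < 1 - a := by linarith
  have hYset : {ω | Y ω = a * X ω} = {ω | (1 - a) * F ω ≤ a * X ω} := by
    ext ω; simp only [Set.mem_setOf_eq, hY, max_eq_left_iff]
  have hmap : μ.map (fun ω => (X ω, F ω)) = (μ.map X).prod (μ.map F) :=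
    (indepFun_iff_map_prod_eq_prod_map_map hmX.aemeasurable hmF.aemeasurable).mp hindep
  have hXneg : μ {ω | X ω ≤ 0} = 0 := hX0 0 le_rfl
  have hmY : Measurable Y := by
    have : Y = fun ω => max (a * X ω) ((1 - a) * F ω) := funext hY
    rw [this]
    exact (measurable_const.mul hmX).max (measurable_const.mul hmF)
  -- Part 1
  have hT : MeasurableSet {p : ℝ × ℝ | (1 - a) * p.2 ≤ a * p.1} :=
    (isClosed_le (continuous_const.mul continuous_snd)
      (continuous_const.mul continuous_fst)).measurableSet
  have hpart1 : μ {ω | Y ω = a * X ω}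
      = ∫⁻ ω, ENNReal.ofReal (exp (-((1 - a) / (a * X ω)))) ∂μ := by
    rw [hYset]
    have e1 : μ {ω | (1 - a) * F ω ≤ a * X ω}
        = (μ.map (fun ω => (X ω, F ω))) {p : ℝ × ℝ | (1 - a) * p.2 ≤ a * p.1} := by
      rw [Measure.map_apply (hmX.prodMk hmF) hT]; rfl
    rw [e1, hmap, Measure.prod_apply hT]
    have hae : ∀ᵐ x ∂(μ.map X),
        (μ.map F) (Prod.mk x ⁻¹' {p : ℝ × ℝ | (1 - a) * p.2 ≤ a * p.1})
          = ENNReal.ofReal (exp (-((1 - a) / (a * x)))) := by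
      have hpos : ∀ᵐ x ∂(μ.map X), 0 < x := by
        rw [ae_iff]
        have : {x : ℝ | ¬ 0 < x} = Set.Iic 0 := by ext x; simp [not_lt]
        rw [this, Measure.map_apply hmX measurableSet_Iic]
        exact hXneg
      filter_upwards [hpos] with x hx
      have e2 : Prod.mk x ⁻¹' {p : ℝ × ℝ | (1 - a) * p.2 ≤ a * p.1}
          = Set.Iic (a * x / (1 - a)) := by
        ext f
        simp only [Set.mem_preimage, Set.mem_setOf_eq, Set.mem_Iic]
        rw [le_div_iff₀ h1a]
        constructor <;> intro h <;> linarith [mul_comm (1 - a) f]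
      rw [e2, Measure.map_apply hmF measurableSet_Iic]
      have : X ⁻¹' Set.Iic (a * x / (1 - a)) = {ω | X ω ≤ a * x / (1 - a)} := rfl
      rw [show F ⁻¹' Set.Iic (a * x / (1 - a)) = {ω | F ω ≤ a * x / (1 - a)} from rfl,
        hF _ (by positivity)]
      congr 2
      rw [one_div_div]
    rw [lintegral_congr_ae hae]
    rw [lintegral_map (f := fun x : ℝ => ENNReal.ofReal (rexp (-((1 - a) / (a * x))))) (by fun_prop) hmX]
  -- Part 2
  have hpos : 0 < μ {ω | Y ω = a * X ω} := by
    rw [hpart1]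
    rw [lintegral_pos_iff_support (f := fun ω => ENNReal.ofReal (exp (-((1 - a) / (a * X ω))))) ((measurable_const.div (hmX.const_mul a)).neg.exp.ennreal_ofReal)]
    have hsupp : Function.support
        (fun ω => ENNReal.ofReal (exp (-((1 - a) / (a * X ω))))) = Set.univ :=
      Set.eq_univ_of_forall fun ω => (ENNReal.ofReal_pos.mpr (exp_pos _)).ne'
    rw [hsupp, measure_univ]
    exact one_pos
  -- Part 3
  have hatomF : ∀ t, μ {ω | F ω = t} = 0 := frechet_atomless μ F hmF hF hF0
  have hpart3 : μ {ω | X ω = a * Y ω} = 0 := by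
    have hdiag : μ {ω | X ω = a * (1 - a) * F ω} = 0 := by
      have hc : (0:ℝ) < a * (1 - a) := by positivity
      have hS : MeasurableSet {p : ℝ × ℝ | p.1 = a * (1 - a) * p.2} :=
        (isClosed_eq continuous_fst (continuous_const.mul continuous_snd)).measurableSet
      have e1 : μ {ω | X ω = a * (1 - a) * F ω}
          = ((μ.map X).prod (μ.map F)) {p : ℝ × ℝ | p.1 = a * (1 - a) * p.2} := by
        rw [← hmap, Measure.map_apply (hmX.prodMk hmF) hS]; rfl
      rw [e1, Measure.prod_apply hS]
      have e2 : ∀ x : ℝ, (μ.map F) (Prod.mk x ⁻¹' {p : ℝ × ℝ | p.1 = a * (1 - a) * p.2}) = 0 := by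
        intro x
        have : Prod.mk x ⁻¹' {p : ℝ × ℝ | p.1 = a * (1 - a) * p.2}
            = {f : ℝ | f = x / (a * (1 - a))} := by
          ext f
          simp only [Set.mem_preimage, Set.mem_setOf_eq]
          rw [eq_div_iff hc.ne']
          constructor <;> intro h <;> linarith [mul_comm (a * (1 - a)) f]
        rw [this, Set.setOf_eq_eq_singleton, Measure.map_apply hmF (measurableSet_singleton _)]
        exact hatomF _
      simp only [e2, lintegral_zero]
    have hsub : {ω | X ω = a * Y ω} ⊆ {ω | X ω ≤ 0} ∪ {ω | X ω = a * (1 - a) * F ω} := by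
      intro ω h
      simp only [Set.mem_setOf_eq] at h
      rw [hY] at h
      rcases max_choice (a * X ω) ((1 - a) * F ω) with hm | hm <;> rw [hm] at h
      · left
        have haa : a * a < 1 := by nlinarith
        have hX0' : X ω = 0 := by nlinarith [h]
        show X ω ≤ 0
        rw [hX0']
      · right
        show X ω = a * (1 - a) * F ω
        rw [h]; ring
    exact le_antisymm ((measure_mono hsub).trans (measure_union_null hXneg hdiag).le) zero_le
  -- Part 4
  have hpart4 : Measure.map (fun ω => (X ω, Y ω)) μ ≠ Measure.map (fun ω => (Y ω, X ω)) μ := by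
    intro h
    have hS : MeasurableSet {p : ℝ × ℝ | p.2 = a * p.1} :=
      (isClosed_eq continuous_snd (continuous_const.mul continuous_fst)).measurableSet
    have h1 : Measure.map (fun ω => (X ω, Y ω)) μ {p : ℝ × ℝ | p.2 = a * p.1}
        = μ {ω | Y ω = a * X ω} := by
      rw [Measure.map_apply (hmX.prodMk hmY) hS]; rfl
    have h2 : Measure.map (fun ω => (Y ω, X ω)) μ {p : ℝ × ℝ | p.2 = a * p.1}
        = μ {ω | X ω = a * Y ω} := by
      rw [Measure.map_apply (hmY.prodMk hmX) hS]; rfl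
    rw [h, h2, hpart3] at h1
    exact hpos.ne' h1.symm
  exact ⟨hpart1, hpos, hpart3, hpart4⟩
end

section
/- Let μ be a σ-finite measure on (0,∞)^ℤ \ {0} (product σ-algebra) such that: (i) μ is (-1)-homogeneous (μ(uA) = u^{-1}μ(A) for u > 0); (ii) μ({f : f(0) ≥ 1}) = 1; (iii) μ is shift-invariant; (iv) μ is supported by the cone C_inv(f_0) = {u f_0(·+s) : u ≥ 0, s ∈ ℤ} for a fixed nonzero f_0 ∈ [0,∞)^ℤ with ∑_s f_0(s) < ∞. Then μ is uniquely determined by f_0; in particular, any two measures satisfying (i)-(iv) are equal. -/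
open MeasureTheory

/-- The smallest shift-invariant cone containing `f₀`:
`C_inv(f₀) = {u f₀(·+s) : u ≥ 0, s ∈ ℤ}`. -/
def Cinv (f₀ : ℤ → ℝ) : Set (ℤ → ℝ) :=
  {g | ∃ u : ℝ, 0 ≤ u ∧ ∃ s : ℤ, g = fun t => u * f₀ (t + s)}

namespace S12

variable (f₀ : ℤ → ℝ) (t₀ : ℤ)

noncomputable def psi (s : ℤ) (g : ℤ → ℝ) : ℝ := g (t₀ - s) / f₀ t₀

def Ray (s : ℤ) : Set (ℤ → ℝ) :=
  {g | 0 < psi f₀ t₀ s g ∧ ∀ t, g t = psi f₀ t₀ s g * f₀ (t + s)}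

def ES (s : ℤ) (a : ℝ) : Set (ℤ → ℝ) :=
  {g | g ∈ Ray f₀ t₀ s ∧ a ≤ psi f₀ t₀ s g}

theorem psi_meas (s : ℤ) : Measurable (psi f₀ t₀ s) :=
  (measurable_pi_apply _).div_const _

theorem ray_meas (s : ℤ) : MeasurableSet (Ray f₀ t₀ s) := by
  have h1 : MeasurableSet {g : ℤ → ℝ | 0 < psi f₀ t₀ s g} :=
    measurableSet_lt measurable_const (psi_meas f₀ t₀ s)
  have h2 : MeasurableSet {g : ℤ → ℝ | ∀ t, g t = psi f₀ t₀ s g * f₀ (t + s)} := by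
    have : {g : ℤ → ℝ | ∀ t, g t = psi f₀ t₀ s g * f₀ (t + s)} =
        ⋂ t : ℤ, {g | g t = psi f₀ t₀ s g * f₀ (t + s)} := by
      ext g; simp
    rw [this]
    exact MeasurableSet.iInter fun t =>
      measurableSet_eq_fun (measurable_pi_apply t) ((psi_meas f₀ t₀ s).mul_const _)
  exact h1.inter h2

theorem es_meas (s : ℤ) (a : ℝ) : MeasurableSet (ES f₀ t₀ s a) :=
  (ray_meas f₀ t₀ s).inter (measurableSet_le measurable_const (psi_meas f₀ t₀ s))

end S12
namespace S12
variable {f₀ : ℤ → ℝ} {t₀ : ℤ}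

theorem psi_phi (ht₀ : f₀ t₀ ≠ 0) (s : ℤ) (u : ℝ) :
    psi f₀ t₀ s (fun t => u * f₀ (t + s)) = u := by
  simp [psi, sub_add_cancel, mul_div_assoc, div_self ht₀]

theorem phi_mem_ray (ht₀ : f₀ t₀ ≠ 0) (s : ℤ) {u : ℝ} (hu : 0 < u) :
    (fun t => u * f₀ (t + s)) ∈ Ray f₀ t₀ s := by
  constructor
  · rw [psi_phi ht₀]; exact hu
  · intro t; rw [psi_phi ht₀]

theorem ray_eq_phi {s : ℤ} {g : ℤ → ℝ} (hg : g ∈ Ray f₀ t₀ s) :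
    g = fun t => psi f₀ t₀ s g * f₀ (t + s) := funext hg.2

theorem psi_smul (s : ℤ) (a : ℝ) (g : ℤ → ℝ) :
    psi f₀ t₀ s (a • g) = a * psi f₀ t₀ s g := by
  simp [psi, mul_div_assoc]

theorem smul_mem_ray (s : ℤ) {a : ℝ} (ha : 0 < a) {g : ℤ → ℝ}
    (hg : g ∈ Ray f₀ t₀ s) : a • g ∈ Ray f₀ t₀ s := by
  refine ⟨?_, fun t => ?_⟩
  · rw [psi_smul]; exact mul_pos ha hg.1
  · rw [psi_smul]
    simp only [Pi.smul_apply, smul_eq_mul]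
    rw [hg.2 t]; ring

theorem es_smul (s : ℤ) {a : ℝ} (ha : 0 < a) :
    ES f₀ t₀ s a = (fun g => a • g) '' (ES f₀ t₀ s 1) := by
  ext g
  constructor
  · rintro ⟨hg, hag⟩
    refine ⟨a⁻¹ • g, ⟨smul_mem_ray s (by positivity) hg, ?_⟩, ?_⟩
    · rw [psi_smul]
      rw [le_inv_mul_iff₀ ha, mul_one]; exact hag
    · show a • a⁻¹ • g = g
      rw [smul_smul, mul_inv_cancel₀ ha.ne', one_smul]
  · rintro ⟨h, ⟨hh, h1h⟩, rfl⟩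
    refine ⟨smul_mem_ray s ha hh, ?_⟩
    rw [psi_smul]
    calc a = a * 1 := (mul_one a).symm
    _ ≤ a * psi f₀ t₀ s h := by
        exact mul_le_mul_of_nonneg_left h1h ha.le

end S12
namespace S12
variable {f₀ : ℤ → ℝ} {t₀ : ℤ}

theorem no_period_aux (hsum : Summable f₀) (ht₀ : 0 < f₀ t₀)
    {d : ℤ} (hd : d ≠ 0) {c : ℝ} (hc : 1 ≤ c)
    (hrel : ∀ t, f₀ (t + d) = c * f₀ t) : False := by
  have key : ∀ n : ℕ, f₀ (t₀ + n * d) = c ^ n * f₀ t₀ := by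
    intro n
    induction n with
    | zero => simp
    | succ n ih =>
      have : t₀ + (n + 1 : ℕ) * d = (t₀ + n * d) + d := by push_cast; ring
      rw [this, hrel, ih, pow_succ]; ring
  have hinj : Function.Injective (fun n : ℕ => t₀ + n * d) := by
    intro n m h
    simp only [add_right_inj] at h
    exact_mod_cast mul_right_cancel₀ hd h
  have h1 : Filter.Tendsto (fun n : ℕ => f₀ (t₀ + n * d)) Filter.atTop (nhds 0) := by
    have := hsum.tendsto_cofinite_zero.comp hinj.tendsto_cofinite
    rwa [Nat.cofinite_eq_atTop] at this
  have h2 : ∀ᶠ n : ℕ in Filter.atTop, f₀ (t₀ + n * d) < f₀ t₀ :=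
    h1.eventually_lt_const ht₀
  obtain ⟨n, hn⟩ := h2.exists
  rw [key n] at hn
  nlinarith [one_le_pow₀ hc (n := n)]

theorem ray_disjoint (hsum : Summable f₀) (ht₀ : 0 < f₀ t₀)
    {s s' : ℤ} (hss : s ≠ s') {g : ℤ → ℝ}
    (hg : g ∈ Ray f₀ t₀ s) (hg' : g ∈ Ray f₀ t₀ s') : False := by
  set u := psi f₀ t₀ s g with hu
  set v := psi f₀ t₀ s' g with hv
  have hrel : ∀ t, f₀ (t + (s' - s)) = (u / v) * f₀ t := by
    intro t
    have h1 := hg.2 (t - s)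
    have h2 := hg'.2 (t - s)
    rw [h1] at h2
    have : t - s + s' = t + (s' - s) := by ring
    rw [this] at h2
    have ht : t - s + s = t := by ring
    rw [ht] at h2
    rw [div_mul_eq_mul_div, eq_div_iff hg'.1.ne']
    rw [← hu, ← hv] at h2
    linear_combination -h2
  have hd : s' - s ≠ 0 := sub_ne_zero.2 (Ne.symm hss)
  have hc : 0 < u / v := div_pos hg.1 hg'.1
  rcases le_or_gt 1 (u / v) with h | h
  · exact no_period_aux hsum ht₀ hd h hrel
  · have h1 : 1 ≤ (u / v)⁻¹ := by
      rw [one_le_inv₀ hc]; exact h.le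
    refine no_period_aux hsum ht₀ (d := s - s') (sub_ne_zero.2 hss) h1 ?_
    intro t
    have h2 := hrel (t + (s - s'))
    have ht : t + (s - s') + (s' - s) = t := by ring
    rw [ht] at h2
    rw [h2, inv_mul_cancel_left₀ hc.ne']

end S12
namespace S12
variable {f₀ : ℤ → ℝ} {t₀ : ℤ}

theorem shift_meas (s : ℤ) : Measurable (fun f : ℤ → ℝ => fun t => f (t + s)) :=
  measurable_pi_lambda _ fun t => measurable_pi_apply (t + s)

theorem psi_shift (s : ℤ) (g : ℤ → ℝ) :
    psi f₀ t₀ s (fun t => g (t + s)) = psi f₀ t₀ 0 g := by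
  simp [psi, sub_add_cancel]

theorem shift_preimage_es (s : ℤ) (a : ℝ) :
    (fun f : ℤ → ℝ => fun t => f (t + s)) ⁻¹' (ES f₀ t₀ s a) = ES f₀ t₀ 0 a := by
  ext g
  simp only [ES, Ray, Set.mem_preimage, Set.mem_setOf_eq, psi_shift]
  constructor
  · rintro ⟨⟨h1, h2⟩, h3⟩
    refine ⟨⟨h1, fun t => ?_⟩, h3⟩
    have := h2 (t - s)
    simpa [sub_add_cancel] using this
  · rintro ⟨⟨h1, h2⟩, h3⟩
    refine ⟨⟨h1, fun t => ?_⟩, h3⟩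
    simpa using h2 (t + s)

section Meas

variable {μ : Measure (ℤ → ℝ)}

theorem meas_level (hμnorm : μ {f | 1 ≤ f 0} = 1)
    (hμshift : ∀ s : ℤ, Measure.map (fun f : ℤ → ℝ => fun t => f (t + s)) μ = μ)
    (hμhom : ∀ u : ℝ, 0 < u → ∀ A : Set (ℤ → ℝ), MeasurableSet A →
      μ ((fun f => u • f) '' A) = ENNReal.ofReal u⁻¹ * μ A)
    (j : ℤ) {c : ℝ} (hc : 0 < c) :
    μ {g | c ≤ g j} = ENNReal.ofReal c⁻¹ := by
  have h0 : μ {g | c ≤ g 0} = ENNReal.ofReal c⁻¹ := by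
    have himg : {g : ℤ → ℝ | c ≤ g 0} = (fun f => c • f) '' {g | 1 ≤ g 0} := by
      ext g
      constructor
      · intro hg
        refine ⟨c⁻¹ • g, ?_, ?_⟩
        · simp only [Set.mem_setOf_eq, Pi.smul_apply, smul_eq_mul]
          rw [le_inv_mul_iff₀ hc, mul_one]; exact hg
        · show c • c⁻¹ • g = g
          rw [smul_smul, mul_inv_cancel₀ hc.ne', one_smul]
      · rintro ⟨h, hh, rfl⟩
        simp only [Set.mem_setOf_eq, Pi.smul_apply, smul_eq_mul]
        calc c = c * 1 := (mul_one c).symm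
        _ ≤ c * h 0 := mul_le_mul_of_nonneg_left hh hc.le
    rw [himg, hμhom c hc _ (measurableSet_le measurable_const (measurable_pi_apply 0)),
      hμnorm, mul_one]
  have hpre : (fun f : ℤ → ℝ => fun t => f (t + j)) ⁻¹' {g | c ≤ g 0} = {g | c ≤ g j} := by
    ext g; simp
  rw [← hpre, ← Measure.map_apply (shift_meas j)
    (measurableSet_le measurable_const (measurable_pi_apply 0)), hμshift j, h0]

theorem es_subset_level (hf₀pos : ∀ t, 0 ≤ f₀ t) (ht₀ : 0 < f₀ t₀) (s : ℤ) :
    ES f₀ t₀ s 1 ⊆ {g | f₀ t₀ ≤ g (t₀ - s)} := by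
  rintro g ⟨hg, h1⟩
  have := hg.2 (t₀ - s)
  simp only [Set.mem_setOf_eq, this, sub_add_cancel]
  nlinarith

theorem meas_es_one_lt_top (hf₀pos : ∀ t, 0 ≤ f₀ t) (ht₀ : 0 < f₀ t₀)
    (hμnorm : μ {f | 1 ≤ f 0} = 1)
    (hμshift : ∀ s : ℤ, Measure.map (fun f : ℤ → ℝ => fun t => f (t + s)) μ = μ)
    (hμhom : ∀ u : ℝ, 0 < u → ∀ A : Set (ℤ → ℝ), MeasurableSet A →
      μ ((fun f => u • f) '' A) = ENNReal.ofReal u⁻¹ * μ A) (s : ℤ) :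
    μ (ES f₀ t₀ s 1) < ⊤ := by
  calc μ (ES f₀ t₀ s 1) ≤ μ {g | f₀ t₀ ≤ g (t₀ - s)} :=
        measure_mono (es_subset_level hf₀pos ht₀ s)
  _ = ENNReal.ofReal (f₀ t₀)⁻¹ := meas_level hμnorm hμshift hμhom _ ht₀
  _ < ⊤ := ENNReal.ofReal_lt_top

theorem meas_es_shift
    (hμshift : ∀ s : ℤ, Measure.map (fun f : ℤ → ℝ => fun t => f (t + s)) μ = μ)
    (s : ℤ) (a : ℝ) : μ (ES f₀ t₀ s a) = μ (ES f₀ t₀ 0 a) := by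
  conv_lhs => rw [← hμshift s]
  rw [Measure.map_apply (shift_meas s) (es_meas f₀ t₀ s a), shift_preimage_es]

theorem meas_es_scale
    (hμhom : ∀ u : ℝ, 0 < u → ∀ A : Set (ℤ → ℝ), MeasurableSet A →
      μ ((fun f => u • f) '' A) = ENNReal.ofReal u⁻¹ * μ A)
    (s : ℤ) {a : ℝ} (ha : 0 < a) :
    μ (ES f₀ t₀ s a) = ENNReal.ofReal a⁻¹ * μ (ES f₀ t₀ s 1) := by
  rw [es_smul s ha, hμhom a ha _ (es_meas f₀ t₀ s 1)]

end Meas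
end S12
namespace S12
variable {f₀ : ℤ → ℝ} {t₀ : ℤ} {μ : Measure (ℤ → ℝ)}

theorem compl_union_rays_null (hf₀pos : ∀ t, 0 ≤ f₀ t) (ht₀ : 0 < f₀ t₀)
    (hμ0 : μ {fun _ => (0 : ℝ)} = 0) (hμsupp : μ (Cinv f₀)ᶜ = 0) :
    μ ((⋃ s, Ray f₀ t₀ s)ᶜ) = 0 := by
  have hsub : (⋃ s, Ray f₀ t₀ s)ᶜ ⊆ (Cinv f₀)ᶜ ∪ {fun _ => (0 : ℝ)} := by
    intro g hg
    by_cases hgc : g ∈ Cinv f₀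
    · right
      obtain ⟨u, hu, s, rfl⟩ := hgc
      rcases eq_or_lt_of_le hu with h | h
      · simp [← h]
      · exact absurd (Set.mem_iUnion.2 ⟨s, phi_mem_ray ht₀.ne' s h⟩) (by simpa using hg)
    · exact Or.inl hgc
  exact measure_mono_null hsub (le_antisymm
    ((measure_union_le _ _).trans (by rw [hμsupp, hμ0]; simp)) (zero_le))

theorem meas_decomp (hf₀pos : ∀ t, 0 ≤ f₀ t) (ht₀ : 0 < f₀ t₀) (hsum : Summable f₀)
    (hμ0 : μ {fun _ => (0 : ℝ)} = 0) (hμsupp : μ (Cinv f₀)ᶜ = 0)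
    {A : Set (ℤ → ℝ)} (hA : MeasurableSet A) :
    μ A = ∑' s : ℤ, μ (A ∩ Ray f₀ t₀ s) := by
  have h1 : μ A = μ (A ∩ ⋃ s, Ray f₀ t₀ s) := by
    rw [← Set.diff_compl]
    exact (measure_diff_null (compl_union_rays_null hf₀pos ht₀ hμ0 hμsupp)).symm
  rw [h1, Set.inter_iUnion]
  exact measure_iUnion
    (fun s s' hss => Set.disjoint_left.2 fun g hg hg' =>
      ray_disjoint hsum ht₀ hss hg.2 hg'.2)
    (fun s => hA.inter (ray_meas f₀ t₀ s))

theorem norm_inter_ray (hf₀pos : ∀ t, 0 ≤ f₀ t) (ht₀ : 0 < f₀ t₀)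
    (hμshift : ∀ s : ℤ, Measure.map (fun f : ℤ → ℝ => fun t => f (t + s)) μ = μ)
    (hμhom : ∀ u : ℝ, 0 < u → ∀ A : Set (ℤ → ℝ), MeasurableSet A →
      μ ((fun f => u • f) '' A) = ENNReal.ofReal u⁻¹ * μ A)
    (s : ℤ) :
    μ ({f | 1 ≤ f 0} ∩ Ray f₀ t₀ s) = ENNReal.ofReal (f₀ s) * μ (ES f₀ t₀ 0 1) := by
  rcases eq_or_lt_of_le (hf₀pos s) with h | h
  · have : {f : ℤ → ℝ | 1 ≤ f 0} ∩ Ray f₀ t₀ s = ∅ := by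
      ext g
      simp only [Set.mem_inter_iff, Set.mem_setOf_eq, Set.mem_empty_iff_false, iff_false,
        not_and]
      intro h1 hg
      have := hg.2 0
      rw [zero_add, ← h, mul_zero] at this
      linarith
    rw [this, ← h]
    simp
  · have hset : {f : ℤ → ℝ | 1 ≤ f 0} ∩ Ray f₀ t₀ s = ES f₀ t₀ s (f₀ s)⁻¹ := by
      ext g
      simp only [Set.mem_inter_iff, Set.mem_setOf_eq, ES]
      constructor
      · rintro ⟨h1, hg⟩
        refine ⟨hg, ?_⟩
        have h2 := hg.2 0
        rw [zero_add] at h2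
        rw [inv_le_iff_one_le_mul₀ h]
        rw [h2] at h1; linarith
      · rintro ⟨hg, h2⟩
        refine ⟨?_, hg⟩
        have h3 := hg.2 0
        rw [zero_add] at h3
        rw [h3]
        rw [inv_le_iff_one_le_mul₀ h] at h2
        linarith
    rw [hset, meas_es_scale hμhom s (by positivity), inv_inv, meas_es_shift hμshift]

theorem norm_identity (hf₀pos : ∀ t, 0 ≤ f₀ t) (ht₀ : 0 < f₀ t₀) (hsum : Summable f₀)
    (hμ0 : μ {fun _ => (0 : ℝ)} = 0) (hμsupp : μ (Cinv f₀)ᶜ = 0)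
    (hμnorm : μ {f | 1 ≤ f 0} = 1)
    (hμshift : ∀ s : ℤ, Measure.map (fun f : ℤ → ℝ => fun t => f (t + s)) μ = μ)
    (hμhom : ∀ u : ℝ, 0 < u → ∀ A : Set (ℤ → ℝ), MeasurableSet A →
      μ ((fun f => u • f) '' A) = ENNReal.ofReal u⁻¹ * μ A) :
    ENNReal.ofReal (∑' t, f₀ t) * μ (ES f₀ t₀ 0 1) = 1 := by
  have h1 := meas_decomp hf₀pos ht₀ hsum hμ0 hμsupp
    (A := {f | 1 ≤ f 0}) (measurableSet_le measurable_const (measurable_pi_apply 0))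
  rw [hμnorm] at h1
  have h2 : ∀ s : ℤ, μ ({f | 1 ≤ f 0} ∩ Ray f₀ t₀ s)
      = ENNReal.ofReal (f₀ s) * μ (ES f₀ t₀ 0 1) :=
    norm_inter_ray hf₀pos ht₀ hμshift hμhom
  rw [ENNReal.ofReal_tsum_of_nonneg hf₀pos hsum, ← ENNReal.tsum_mul_right]
  rw [h1]
  exact tsum_congr fun s => (h2 s).symm

theorem meas_es_value (hf₀pos : ∀ t, 0 ≤ f₀ t) (ht₀ : 0 < f₀ t₀) (hsum : Summable f₀)
    (hμ0 : μ {fun _ => (0 : ℝ)} = 0) (hμsupp : μ (Cinv f₀)ᶜ = 0)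
    (hμnorm : μ {f | 1 ≤ f 0} = 1)
    (hμshift : ∀ s : ℤ, Measure.map (fun f : ℤ → ℝ => fun t => f (t + s)) μ = μ)
    (hμhom : ∀ u : ℝ, 0 < u → ∀ A : Set (ℤ → ℝ), MeasurableSet A →
      μ ((fun f => u • f) '' A) = ENNReal.ofReal u⁻¹ * μ A)
    (s : ℤ) {a : ℝ} (ha : 0 < a) :
    μ (ES f₀ t₀ s a) = ENNReal.ofReal a⁻¹ * (ENNReal.ofReal (∑' t, f₀ t))⁻¹ := by
  have hS : 0 < ∑' t, f₀ t := Summable.tsum_pos hsum hf₀pos t₀ ht₀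
  have hc0 : (ENNReal.ofReal (∑' t, f₀ t)) ≠ 0 := by
    simp [ENNReal.ofReal_eq_zero]; linarith
  have hctop : (ENNReal.ofReal (∑' t, f₀ t)) ≠ ⊤ := ENNReal.ofReal_ne_top
  have hm : μ (ES f₀ t₀ 0 1) = (ENNReal.ofReal (∑' t, f₀ t))⁻¹ := by
    have := norm_identity hf₀pos ht₀ hsum hμ0 hμsupp hμnorm hμshift hμhom
    calc μ (ES f₀ t₀ 0 1)
        = (ENNReal.ofReal (∑' t, f₀ t))⁻¹ * (ENNReal.ofReal (∑' t, f₀ t)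
            * μ (ES f₀ t₀ 0 1)) := by
          rw [← mul_assoc, ENNReal.inv_mul_cancel hc0 hctop, one_mul]
    _ = (ENNReal.ofReal (∑' t, f₀ t))⁻¹ := by rw [this, mul_one]
  rw [meas_es_scale hμhom s ha, meas_es_shift hμshift, hm]

end S12
namespace S12
variable {f₀ : ℤ → ℝ} {t₀ : ℤ} {μ ν : Measure (ℤ → ℝ)}

noncomputable def rho (f₀ : ℤ → ℝ) (t₀ : ℤ) (μ : Measure (ℤ → ℝ)) (s : ℤ) : Measure ℝ :=
  Measure.map (fun g => Real.log (psi f₀ t₀ s g)) (μ.restrict (Ray f₀ t₀ s))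

theorem logpsi_meas (s : ℤ) : Measurable (fun g => Real.log (psi f₀ t₀ s g)) :=
  Real.measurable_log.comp (psi_meas f₀ t₀ s)

theorem phi'_meas (s : ℤ) : Measurable (fun x : ℝ => fun t : ℤ => Real.exp x * f₀ (t + s)) :=
  measurable_pi_lambda _ fun t => Real.measurable_exp.mul_const _

theorem rho_ico (hf₀pos : ∀ t, 0 ≤ f₀ t) (ht₀ : 0 < f₀ t₀) (hsum : Summable f₀)
    (hμ0 : μ {fun _ => (0 : ℝ)} = 0) (hμsupp : μ (Cinv f₀)ᶜ = 0)
    (hμnorm : μ {f | 1 ≤ f 0} = 1)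
    (hμshift : ∀ s : ℤ, Measure.map (fun f : ℤ → ℝ => fun t => f (t + s)) μ = μ)
    (hμhom : ∀ u : ℝ, 0 < u → ∀ A : Set (ℤ → ℝ), MeasurableSet A →
      μ ((fun f => u • f) '' A) = ENNReal.ofReal u⁻¹ * μ A)
    (s : ℤ) {a b : ℝ} (hab : a ≤ b) :
    rho f₀ t₀ μ s (Set.Ico a b)
      = ENNReal.ofReal (Real.exp a)⁻¹ * (ENNReal.ofReal (∑' t, f₀ t))⁻¹
        - ENNReal.ofReal (Real.exp b)⁻¹ * (ENNReal.ofReal (∑' t, f₀ t))⁻¹ := by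
  have hpre : (fun g => Real.log (psi f₀ t₀ s g)) ⁻¹' (Set.Ico a b) ∩ Ray f₀ t₀ s
      = ES f₀ t₀ s (Real.exp a) \ ES f₀ t₀ s (Real.exp b) := by
    ext g
    simp only [Set.mem_inter_iff, Set.mem_preimage, Set.mem_Ico, Set.mem_diff, ES,
      Set.mem_setOf_eq]
    constructor
    · rintro ⟨⟨h1, h2⟩, hg⟩
      refine ⟨⟨hg, (Real.le_log_iff_exp_le hg.1).1 h1⟩, ?_⟩
      rintro ⟨-, h3⟩
      have := (Real.log_lt_iff_lt_exp hg.1).1 h2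
      linarith
    · rintro ⟨⟨hg, h1⟩, h2⟩
      have h3 : psi f₀ t₀ s g < Real.exp b := by
        by_contra h4
        exact h2 ⟨hg, not_lt.1 h4⟩
      exact ⟨⟨(Real.le_log_iff_exp_le hg.1).2 h1, (Real.log_lt_iff_lt_exp hg.1).2 h3⟩, hg⟩
  rw [rho, Measure.map_apply (logpsi_meas s) measurableSet_Ico,
    Measure.restrict_apply ((logpsi_meas s) measurableSet_Ico), hpre]
  have hsub : ES f₀ t₀ s (Real.exp b) ⊆ ES f₀ t₀ s (Real.exp a) :=
    fun g hg => ⟨hg.1, (Real.exp_le_exp.2 hab).trans hg.2⟩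
  rw [measure_diff hsub (es_meas f₀ t₀ s _).nullMeasurableSet
    (by
      rw [meas_es_value hf₀pos ht₀ hsum hμ0 hμsupp hμnorm hμshift hμhom s (Real.exp_pos b)]
      exact ENNReal.mul_ne_top ENNReal.ofReal_ne_top
        (by
          simp only [Ne, ENNReal.inv_eq_top, ENNReal.ofReal_eq_zero, not_le]
          exact Summable.tsum_pos hsum hf₀pos t₀ ht₀)),
    meas_es_value hf₀pos ht₀ hsum hμ0 hμsupp hμnorm hμshift hμhom s (Real.exp_pos a),
    meas_es_value hf₀pos ht₀ hsum hμ0 hμsupp hμnorm hμshift hμhom s (Real.exp_pos b)]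

theorem restrict_eq_map (ht₀ : 0 < f₀ t₀) (s : ℤ) :
    μ.restrict (Ray f₀ t₀ s)
      = Measure.map (fun x : ℝ => fun t : ℤ => Real.exp x * f₀ (t + s)) (rho f₀ t₀ μ s) := by
  rw [rho, Measure.map_map (phi'_meas s) (logpsi_meas s)]
  have : (fun x : ℝ => fun t : ℤ => Real.exp x * f₀ (t + s))
        ∘ (fun g => Real.log (psi f₀ t₀ s g))
      =ᵐ[μ.restrict (Ray f₀ t₀ s)] id := by
    refine (ae_restrict_mem (ray_meas f₀ t₀ s)).mono fun g hg => ?_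
    funext t
    simp only [Function.comp_apply, id_eq, Real.exp_log hg.1]
    exact (hg.2 t).symm
  rw [Measure.map_congr this, Measure.map_id]

theorem eq_sum_restrict (hf₀pos : ∀ t, 0 ≤ f₀ t) (ht₀ : 0 < f₀ t₀) (hsum : Summable f₀)
    (hμ0 : μ {fun _ => (0 : ℝ)} = 0) (hμsupp : μ (Cinv f₀)ᶜ = 0) :
    μ = Measure.sum (fun s : ℤ => μ.restrict (Ray f₀ t₀ s)) := by
  ext A hA
  rw [Measure.sum_apply _ hA]
  simp only [Measure.restrict_apply hA]
  exact meas_decomp hf₀pos ht₀ hsum hμ0 hμsupp hA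

end S12
namespace S12
variable {f₀ : ℤ → ℝ} {t₀ : ℤ} {μ ν : Measure (ℤ → ℝ)}

theorem rho_eq (hf₀pos : ∀ t, 0 ≤ f₀ t) (ht₀ : 0 < f₀ t₀) (hsum : Summable f₀)
    (hμ0 : μ {fun _ => (0 : ℝ)} = 0) (hν0 : ν {fun _ => (0 : ℝ)} = 0)
    (hμsupp : μ (Cinv f₀)ᶜ = 0) (hνsupp : ν (Cinv f₀)ᶜ = 0)
    (hμnorm : μ {f | 1 ≤ f 0} = 1) (hνnorm : ν {f | 1 ≤ f 0} = 1)
    (hμshift : ∀ s : ℤ, Measure.map (fun f : ℤ → ℝ => fun t => f (t + s)) μ = μ)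
    (hνshift : ∀ s : ℤ, Measure.map (fun f : ℤ → ℝ => fun t => f (t + s)) ν = ν)
    (hμhom : ∀ u : ℝ, 0 < u → ∀ A : Set (ℤ → ℝ), MeasurableSet A →
      μ ((fun f => u • f) '' A) = ENNReal.ofReal u⁻¹ * μ A)
    (hνhom : ∀ u : ℝ, 0 < u → ∀ A : Set (ℤ → ℝ), MeasurableSet A →
      ν ((fun f => u • f) '' A) = ENNReal.ofReal u⁻¹ * ν A)
    (s : ℤ) : rho f₀ t₀ μ s = rho f₀ t₀ ν s := by
  refine Measure.ext_of_generateFrom_of_iUnion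
    { S : Set ℝ | ∃ l u : ℝ, l < u ∧ Set.Ico l u = S }
    (fun n : ℕ => Set.Ico (-(n + 1) : ℝ) (n + 1))
    (BorelSpace.measurable_eq.trans (borel_eq_generateFrom_Ico ℝ))
    (isPiSystem_Ico (id : ℝ → ℝ) id) ?_ ?_ ?_ ?_
  · ext x
    simp only [Set.mem_iUnion, Set.mem_Ico, Set.mem_univ, iff_true]
    obtain ⟨n, hn⟩ := exists_nat_gt |x|
    exact ⟨n, by cases abs_lt.1 hn; constructor <;> push_cast <;> linarith⟩
  · intro n
    exact ⟨-(n + 1), n + 1, by linarith [Nat.cast_nonneg (α := ℝ) n], rfl⟩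
  · intro n
    rw [rho_ico hf₀pos ht₀ hsum hμ0 hμsupp hμnorm hμshift hμhom s
      (by push_cast; linarith [Nat.cast_nonneg (α := ℝ) n])]
    exact (tsub_le_self.trans_lt (ENNReal.mul_lt_top ENNReal.ofReal_lt_top
      (by
        simp only [ENNReal.inv_lt_top, ENNReal.ofReal_pos]
        exact Summable.tsum_pos hsum hf₀pos t₀ ht₀))).ne
  · rintro S ⟨l, u, hlu, rfl⟩
    rw [rho_ico hf₀pos ht₀ hsum hμ0 hμsupp hμnorm hμshift hμhom s hlu.le,
      rho_ico hf₀pos ht₀ hsum hν0 hνsupp hνnorm hνshift hνhom s hlu.le]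

end S12

/-- A σ-finite measure `μ` on `(0,∞)^ℤ \ {0}` (here: on `ℤ → ℝ`, giving no mass to the
zero function) which is (i) `(-1)`-homogeneous, (ii) normalized by `μ{f : f(0) ≥ 1} = 1`,
(iii) shift-invariant, and (iv) supported by the cone `C_inv(f₀)` for a fixed nonzero
nonnegative summable `f₀`, is uniquely determined: any two such measures are equal. -/
theorem stmt12 (f₀ : ℤ → ℝ) (hf₀pos : ∀ t, 0 ≤ f₀ t) (hf₀ne : f₀ ≠ 0)
    (hf₀sum : Summable f₀)
    (μ ν : Measure (ℤ → ℝ)) [SigmaFinite μ] [SigmaFinite ν]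
    (hμ0 : μ {fun _ => (0 : ℝ)} = 0) (hν0 : ν {fun _ => (0 : ℝ)} = 0)
    (hμhom : ∀ u : ℝ, 0 < u → ∀ A : Set (ℤ → ℝ), MeasurableSet A →
      μ ((fun f => u • f) '' A) = ENNReal.ofReal u⁻¹ * μ A)
    (hνhom : ∀ u : ℝ, 0 < u → ∀ A : Set (ℤ → ℝ), MeasurableSet A →
      ν ((fun f => u • f) '' A) = ENNReal.ofReal u⁻¹ * ν A)
    (hμnorm : μ {f | 1 ≤ f 0} = 1) (hνnorm : ν {f | 1 ≤ f 0} = 1)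
    (hμshift : ∀ s : ℤ, Measure.map (fun f : ℤ → ℝ => fun t => f (t + s)) μ = μ)
    (hνshift : ∀ s : ℤ, Measure.map (fun f : ℤ → ℝ => fun t => f (t + s)) ν = ν)
    (hμsupp : μ (Cinv f₀)ᶜ = 0) (hνsupp : ν (Cinv f₀)ᶜ = 0) :
    μ = ν := by
  obtain ⟨t₀, ht₀'⟩ := Function.ne_iff.1 hf₀ne
  have ht₀ : 0 < f₀ t₀ := lt_of_le_of_ne (hf₀pos t₀) (by simpa using (Ne.symm ht₀'))
  calc μ = Measure.sum (fun s : ℤ => μ.restrict (S12.Ray f₀ t₀ s)) :=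
      S12.eq_sum_restrict hf₀pos ht₀ hf₀sum hμ0 hμsupp
  _ = Measure.sum (fun s : ℤ =>
        Measure.map (fun x : ℝ => fun t : ℤ => Real.exp x * f₀ (t + s))
          (S12.rho f₀ t₀ μ s)) := by
      congr 1; funext s; exact S12.restrict_eq_map ht₀ s
  _ = Measure.sum (fun s : ℤ =>
        Measure.map (fun x : ℝ => fun t : ℤ => Real.exp x * f₀ (t + s))
          (S12.rho f₀ t₀ ν s)) := by
      congr 1; funext s
      rw [S12.rho_eq hf₀pos ht₀ hf₀sum hμ0 hν0 hμsupp hνsupp hμnorm hνnorm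
        hμshift hνshift hμhom hνhom s]
  _ = Measure.sum (fun s : ℤ => ν.restrict (S12.Ray f₀ t₀ s)) := by
      congr 1; funext s; exact (S12.restrict_eq_map ht₀ s).symm
  _ = ν := (S12.eq_sum_restrict hf₀pos ht₀ hf₀sum hν0 hνsupp).symm
end
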